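/- If μ is a Borel measure on ℝⁿ that is finite on dyadic cubes, and (a_Q)_{Q∈𝒟} is a nonnegative sequence indexed by dyadic cubes satisfying the Carleson condition ∑_{Q⊆R} a_Q ≤ C·μ(R) for all dyadic cubes R, then for every f ∈ L²(μ) one has ∑_{Q∈𝒟} a_Q |⟨f⟩^μ_Q|² ≤ C'·‖f‖²_{L²(μ)}, where ⟨f⟩^μ_Q = μ(Q)⁻¹∫_Q f dμ and C' depends only on C. -/

import Mathlib

open MeasureTheory Filter
open scoped ENNReal

/-- A dyadic cube in `ℝⁿ`, encoded by its generation `k` (side length `2 ^ k`)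
and position `m` (corner at `m * 2 ^ k`). -/
structure DyadicCube (n : ℕ) where
  k : ℤ
  m : Fin n → ℤ

namespace DyadicCube

variable {n : ℕ}

/-- The underlying half-open cube in `ℝⁿ`. -/
def toSet (Q : DyadicCube n) : Set (Fin n → ℝ) :=
  {x | ∀ i, (Q.m i : ℝ) * (2 : ℝ) ^ Q.k ≤ x i ∧ x i < ((Q.m i : ℝ) + 1) * (2 : ℝ) ^ Q.k}

/-- The side length `ℓ(Q)` of the cube. -/
noncomputable def len (Q : DyadicCube n) : ℝ := (2 : ℝ) ^ Q.k

/-- The dyadic parent `Q^{(1)}`. -/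
def parent (Q : DyadicCube n) : DyadicCube n :=
  ⟨Q.k + 1, fun i => Int.fdiv (Q.m i) 2⟩

/-- The ancestor `Q^{(r)}` of order `r`. -/
def iterParent (Q : DyadicCube n) (r : ℕ) : DyadicCube n := parent^[r] Q

/-- The dyadic child of `Q` indexed by `ε : Fin n → Bool`. -/
def child (Q : DyadicCube n) (ε : Fin n → Bool) : DyadicCube n :=
  ⟨Q.k - 1, fun i => 2 * Q.m i + (if ε i then 1 else 0)⟩

/-- The descendant of `Q` of order `r` indexed by `v`; these enumerate `ch^r Q`. -/
def childIter (Q : DyadicCube n) (r : ℕ) (v : Fin n → Fin (2 ^ r)) : DyadicCube n :=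
  ⟨Q.k - r, fun i => 2 ^ r * Q.m i + ((v i : ℕ) : ℤ)⟩

end DyadicCube

variable {n : ℕ}

/-- The `μ`-average of `f` over a dyadic cube (zero when the cube is `μ`-null). -/
noncomputable def avg (μ : Measure (Fin n → ℝ)) (f : (Fin n → ℝ) → ℝ) (Q : DyadicCube n) : ℝ :=
  if μ Q.toSet = 0 then 0 else (∫ x in Q.toSet, f x ∂μ) / (μ Q.toSet).toReal

/-- The expectation `E^b_Q f = (⟨f⟩_Q / ⟨b⟩_Q) · b · 1_Q` adapted to an accretive function `b`. -/
noncomputable def Eb (μ : Measure (Fin n → ℝ)) (b f : (Fin n → ℝ) → ℝ) (Q : DyadicCube n) :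
    (Fin n → ℝ) → ℝ :=
  fun x => (avg μ f Q / avg μ b Q) * Q.toSet.indicator b x

/-- The martingale difference `Δ^b_Q f = ∑_{Q' ∈ ch Q} E^b_{Q'} f − E^b_Q f`. -/
noncomputable def Db (μ : Measure (Fin n → ℝ)) (b f : (Fin n → ℝ) → ℝ) (Q : DyadicCube n) :
    (Fin n → ℝ) → ℝ :=
  fun x => (∑ ε : Fin n → Bool, Eb μ b f (Q.child ε) x) - Eb μ b f Q x

/-- The expectation `E^μ_Q f = (⟨f⟩_Q / ⟨b_Q⟩_Q) b_Q` adapted to an accretive system. -/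
noncomputable def Esys (μ : Measure (Fin n → ℝ)) (b : DyadicCube n → (Fin n → ℝ) → ℝ)
    (f : (Fin n → ℝ) → ℝ) (Q : DyadicCube n) : (Fin n → ℝ) → ℝ :=
  fun x => (avg μ f Q / avg μ (b Q) Q) * b Q x

/-- The martingale difference `Δ^μ_Q` adapted to an accretive system. -/
noncomputable def Dsys (μ : Measure (Fin n → ℝ)) (b : DyadicCube n → (Fin n → ℝ) → ℝ)
    (f : (Fin n → ℝ) → ℝ) (Q : DyadicCube n) : (Fin n → ℝ) → ℝ :=
  fun x => (∑ ε : Fin n → Bool, Esys μ b f (Q.child ε) x) - Esys μ b f Q x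

/-- The (formal) adjoint `(Δ^μ_Q)^*`, given by its explicit formula. -/
noncomputable def DsysStar (μ : Measure (Fin n → ℝ)) (b : DyadicCube n → (Fin n → ℝ) → ℝ)
    (f : (Fin n → ℝ) → ℝ) (Q : DyadicCube n) : (Fin n → ℝ) → ℝ :=
  fun x => ∑ ε : Fin n → Bool,
    (Q.child ε).toSet.indicator
      (fun _ => avg μ (fun y => b (Q.child ε) y * f y) (Q.child ε)
                  / avg μ (b (Q.child ε)) (Q.child ε)
                - avg μ (fun y => b Q y * f y) Q / avg μ (b Q) Q) x

/-- The set `𝒮_b` of cubes where the accretive system changes between generations. -/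
def Sb (b : DyadicCube n → (Fin n → ℝ) → ℝ) : Set (DyadicCube n) :=
  {Q | b Q ≠ fun x => Q.toSet.indicator (b Q.parent) x}

/-- An `L^∞(μ)`-accretive system with constants `δ` and `C`. -/
structure AccretiveSystem (μ : Measure (Fin n → ℝ)) (b : DyadicCube n → (Fin n → ℝ) → ℝ)
    (δ C : ℝ) : Prop where
  meas : ∀ Q : DyadicCube n, Measurable (b Q)
  supp : ∀ Q : DyadicCube n, ∀ x, x ∉ Q.toSet → b Q x = 0
  bdd : ∀ Q : DyadicCube n, eLpNorm (b Q) ∞ μ ≤ ENNReal.ofReal C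
  acc : ∀ Q : DyadicCube n, δ * (μ Q.toSet).toReal ≤ |∫ x in Q.toSet, b Q x ∂μ|

/-- A family of dyadic cubes is `μ`-sparse (i.e. `μ`-Carleson) with constant `Λ`. -/
def IsSparse (μ : Measure (Fin n → ℝ)) (S : Set (DyadicCube n)) (Λ : ℝ≥0∞) : Prop :=
  ∀ R : DyadicCube n,
    ∑' Q : {Q : DyadicCube n // Q ∈ S ∧ Q.toSet ⊆ R.toSet}, μ Q.1.toSet ≤ Λ * μ R.toSet
namespace DyadicCube

variable {n : ℕ}

instance : Countable (DyadicCube n) := by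
  have : Function.Injective (fun Q : DyadicCube n => (Q.k, Q.m)) := by
    intro ⟨a,b⟩ ⟨c,d⟩ h; simp_all
  exact this.countable

lemma measurableSet_toSet (Q : DyadicCube n) : MeasurableSet Q.toSet := by
  have : Q.toSet = Set.pi Set.univ
      (fun i => Set.Ico ((Q.m i : ℝ) * 2 ^ Q.k) (((Q.m i : ℝ) + 1) * 2 ^ Q.k)) := by
    ext x; simp [toSet, Set.mem_pi, Set.mem_Ico]
  rw [this]
  exact MeasurableSet.univ_pi fun i => measurableSet_Ico

lemma subset_parent (Q : DyadicCube n) : Q.toSet ⊆ Q.parent.toSet := by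
  intro x hx i
  obtain ⟨h1, h2⟩ := hx i
  have hd : Int.fdiv (Q.m i) 2 = Q.m i / 2 := Int.fdiv_eq_ediv_of_nonneg _ (by norm_num)
  have he := Int.mul_ediv_add_emod (Q.m i) 2
  have he1 := Int.emod_nonneg (Q.m i) (by norm_num : (2:ℤ) ≠ 0)
  have he2 := Int.emod_lt_of_pos (Q.m i) (show (0:ℤ) < 2 by norm_num)
  have e1 : 2 * (Q.m i / 2) ≤ Q.m i := by omega
  have e2 : Q.m i ≤ 2 * (Q.m i / 2) + 1 := by omega
  have hpow : (2:ℝ) ^ (Q.k + 1) = 2 * 2 ^ Q.k := by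
    rw [zpow_add_one₀ (by norm_num : (2:ℝ) ≠ 0)]; ring
  have hpos : (0:ℝ) < 2 ^ Q.k := zpow_pos (by norm_num) _
  constructor
  · simp only [parent, hd, hpow]
    calc ((Q.m i / 2 : ℤ) : ℝ) * (2 * 2 ^ Q.k) = ((2 * (Q.m i / 2) : ℤ) : ℝ) * 2 ^ Q.k := by
          push_cast; ring
    _ ≤ (Q.m i : ℝ) * 2 ^ Q.k := by
          apply mul_le_mul_of_nonneg_right _ hpos.le; exact_mod_cast e1
    _ ≤ x i := h1
  · simp only [parent, hd, hpow]
    calc x i < ((Q.m i : ℝ) + 1) * 2 ^ Q.k := h2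
    _ = ((Q.m i : ℝ) + 1) * 2 ^ Q.k := rfl
    _ ≤ ((((Q.m i / 2 : ℤ) : ℝ) + 1) * 2) * 2 ^ Q.k := by
          refine mul_le_mul_of_nonneg_right ?_ hpos.le
          have : (Q.m i : ℝ) + 1 ≤ ((2 * (Q.m i / 2) + 2 : ℤ) : ℝ) := by
            exact_mod_cast (by omega : Q.m i + 1 ≤ 2 * (Q.m i / 2) + 2)
          calc (Q.m i : ℝ) + 1 ≤ ((2 * (Q.m i / 2) + 2 : ℤ) : ℝ) := this
          _ = (((Q.m i / 2 : ℤ) : ℝ) + 1) * 2 := by push_cast; ring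
    _ = (((Q.m i / 2 : ℤ) : ℝ) + 1) * (2 * 2 ^ Q.k) := by ring

lemma iterParent_k (Q : DyadicCube n) (r : ℕ) : (Q.iterParent r).k = Q.k + r := by
  induction r with
  | zero => simp [iterParent]
  | succ r ih =>
    rw [iterParent, Function.iterate_succ_apply'] at *
    show (parent _).k = _
    rw [show (parent (parent^[r] Q)).k = (parent^[r] Q).k + 1 from rfl, ih]
    push_cast; ring

lemma subset_iterParent (Q : DyadicCube n) (r : ℕ) : Q.toSet ⊆ (Q.iterParent r).toSet := by
  induction r with
  | zero => simp [iterParent]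
  | succ r ih =>
    rw [iterParent, Function.iterate_succ_apply']
    exact ih.trans (subset_parent _)

lemma iterParent_iterParent (Q : DyadicCube n) (r d : ℕ) :
    (Q.iterParent r).iterParent d = Q.iterParent (r + d) := by
  simp [iterParent, add_comm r d, Function.iterate_add_apply]

lemma eq_of_k_eq_of_mem {P R : DyadicCube n} (hk : P.k = R.k) {x : Fin n → ℝ}
    (hP : x ∈ P.toSet) (hR : x ∈ R.toSet) : P = R := by
  obtain ⟨kp, mp⟩ := P
  obtain ⟨kr, mr⟩ := R
  simp only [mk.injEq] at hk ⊢
  subst hk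
  refine ⟨rfl, funext fun i => ?_⟩
  obtain ⟨h1, h2⟩ := hP i
  obtain ⟨h3, h4⟩ := hR i
  have hpos : (0:ℝ) < 2 ^ kp := zpow_pos (by norm_num) _
  have a1 : (mp i : ℝ) < mr i + 1 := by
    have := h1.trans_lt h4
    exact lt_of_mul_lt_mul_right this hpos.le
  have a2 : (mr i : ℝ) < mp i + 1 := by
    have := h3.trans_lt h2
    exact lt_of_mul_lt_mul_right this hpos.le
  have : mp i < mr i + 1 := by exact_mod_cast a1
  have : mr i < mp i + 1 := by exact_mod_cast a2
  omega

lemma ancestor_of_inter {P R : DyadicCube n} (hk : P.k ≤ R.k)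
    (h : (P.toSet ∩ R.toSet).Nonempty) : R = P.iterParent (R.k - P.k).toNat := by
  obtain ⟨x, hxP, hxR⟩ := h
  set d := (R.k - P.k).toNat with hd
  clear_value d
  have hd' : R.k = P.k + d := by omega
  clear hd hk
  induction d generalizing P with
  | zero =>
    simp only [iterParent, Function.iterate_zero, id]
    exact (eq_of_k_eq_of_mem (by omega) hxP hxR).symm
  | succ d ih =>
    have h1 : R = P.parent.iterParent d := ih (subset_parent _ hxP) (by simp [parent]; omega)
    rw [h1, show P.parent = P.iterParent 1 from rfl, iterParent_iterParent, add_comm]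

end DyadicCube

open DyadicCube Set

variable {n : ℕ}

/-- ENNReal average of `g` over cube. -/
noncomputable def eAvg (μ : Measure (Fin n → ℝ)) (g : (Fin n → ℝ) → ℝ≥0∞) (Q : DyadicCube n) : ℝ≥0∞ :=
  (∫⁻ x in Q.toSet, g x ∂μ) / μ Q.toSet

lemma core_bound (μ : Measure (Fin n → ℝ)) (hfin : ∀ Q : DyadicCube n, μ Q.toSet < ⊤)
    (a : DyadicCube n → ℝ≥0∞) (C : ℝ≥0∞)
    (hCar : ∀ R : DyadicCube n,
      ∑' Q : {Q : DyadicCube n // Q.toSet ⊆ R.toSet}, a Q.1 ≤ C * μ R.toSet)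
    (g : (Fin n → ℝ) → ℝ≥0∞) (hg : Measurable g) (t : ℝ) (ht : 0 < t) :
    ENNReal.ofReal (t/2) *
        ∑' Q : DyadicCube n, Set.indicator {Q : DyadicCube n | ENNReal.ofReal t < eAvg μ g Q} a Q
      ≤ C * ∫⁻ x, Set.indicator {x | ENNReal.ofReal (t/2) < g x} g x ∂μ := by
  classical
  set S : Set (DyadicCube n) := {Q : DyadicCube n | ENNReal.ofReal t < eAvg μ g Q} with hS
  set U : Set (Fin n → ℝ) := {x | ENNReal.ofReal (t/2) < g x} with hU
  set φ : (Fin n → ℝ) → ℝ≥0∞ := U.indicator g with hφ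
  -- single-cube measure bound for cubes in S
  have key : ∀ R ∈ S, ENNReal.ofReal (t/2) * μ R.toSet ≤ ∫⁻ x in R.toSet, φ x ∂μ := by
    intro R hR
    by_contra hcon
    push_neg at hcon
    have hμ0 : μ R.toSet ≠ 0 := by
      intro h0
      have : eAvg μ g R = 0 := by
        rw [eAvg, setLIntegral_measure_zero _ _ h0]; simp
      rw [hS] at hR
      simp only [Set.mem_setOf_eq, this] at hR
      exact (not_lt_of_ge zero_le) hR
    have hUm : MeasurableSet U := measurableSet_lt measurable_const hg
    have hR' : ENNReal.ofReal t < (∫⁻ x in R.toSet, g x ∂μ) / μ R.toSet := hR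
    have hInt : ENNReal.ofReal t * μ R.toSet < ∫⁻ x in R.toSet, g x ∂μ :=
      (ENNReal.lt_div_iff_mul_lt (Or.inl hμ0) (Or.inl (hfin R).ne)).1 hR'
    have hsplit : (∫⁻ x in R.toSet, g x ∂μ)
        ≤ (∫⁻ x in R.toSet, φ x ∂μ) + ENNReal.ofReal (t/2) * μ R.toSet := by
      have hpt : ∀ x, g x ≤ φ x + Uᶜ.indicator g x := by
        intro x
        by_cases hx : x ∈ U
        · simp [hφ, Set.indicator_of_mem hx]
        · simp [hφ, Set.indicator_of_notMem hx, Set.indicator_of_mem (Set.mem_compl hx)]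
      calc (∫⁻ x in R.toSet, g x ∂μ) ≤ ∫⁻ x in R.toSet, (φ x + Uᶜ.indicator g x) ∂μ :=
            lintegral_mono hpt
      _ = (∫⁻ x in R.toSet, φ x ∂μ) + ∫⁻ x in R.toSet, Uᶜ.indicator g x ∂μ := by
            exact lintegral_add_left (hg.indicator hUm) _
      _ ≤ (∫⁻ x in R.toSet, φ x ∂μ) + ENNReal.ofReal (t/2) * μ R.toSet := by
            gcongr
            calc (∫⁻ x in R.toSet, Uᶜ.indicator g x ∂μ)
                ≤ ∫⁻ _ in R.toSet, ENNReal.ofReal (t/2) ∂μ := by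
                  apply lintegral_mono
                  intro x
                  by_cases hx : x ∈ U
                  · simp [Set.indicator_of_notMem (by simpa using hx : x ∉ Uᶜ)]
                  · rw [Set.indicator_of_mem (Set.mem_compl hx)]
                    simpa [hU] using hx
            _ = ENNReal.ofReal (t/2) * μ R.toSet := setLIntegral_const _ _
    have hfin2 : ENNReal.ofReal (t/2) * μ R.toSet ≠ ⊤ :=
      ENNReal.mul_ne_top ENNReal.ofReal_ne_top (hfin R).ne
    have : (∫⁻ x in R.toSet, g x ∂μ) < ENNReal.ofReal t * μ R.toSet := by
      calc (∫⁻ x in R.toSet, g x ∂μ)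
          ≤ (∫⁻ x in R.toSet, φ x ∂μ) + ENNReal.ofReal (t/2) * μ R.toSet := hsplit
      _ < ENNReal.ofReal (t/2) * μ R.toSet + ENNReal.ofReal (t/2) * μ R.toSet :=
            ENNReal.add_lt_add_right hfin2 hcon
      _ = ENNReal.ofReal t * μ R.toSet := by
            rw [← add_mul, ← ENNReal.ofReal_add (by positivity) (by positivity)]
            norm_num
    exact absurd hInt (not_lt_of_gt this)
  -- reduce tsum to finsets
  rw [ENNReal.tsum_eq_iSup_sum, ENNReal.mul_iSup]
  refine iSup_le fun s0 => ?_
  rw [show (∑ Q ∈ s0, S.indicator a Q) = ∑ Q ∈ s0.filter (· ∈ S), a Q by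
    rw [Finset.sum_filter]
    exact Finset.sum_congr rfl fun Q _ => by by_cases h : Q ∈ S <;> simp [h]]
  set s := s0.filter (· ∈ S) with hs
  have hsS : ∀ Q ∈ s, Q ∈ S := fun Q hQ => (Finset.mem_filter.1 hQ).2
  rcases s.eq_empty_or_nonempty with he | hne
  · simp [he]
  -- the top construction
  set N : ℤ := s.sup' hne (fun Q => Q.k) with hN
  have hkN : ∀ Q ∈ s, Q.k ≤ N := fun Q hQ => Finset.le_sup' _ hQ
  set r : DyadicCube n → ℕ :=
    fun Q => Nat.findGreatest (fun j => Q.iterParent j ∈ S) ((N - Q.k).toNat) with hr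
  set top : DyadicCube n → DyadicCube n := fun Q => Q.iterParent (r Q) with htop
  have htopS : ∀ Q ∈ s, top Q ∈ S := by
    intro Q hQ
    simp only [htop, hr]
    exact Nat.findGreatest_spec (P := fun j => Q.iterParent j ∈ S)
      (n := (N - Q.k).toNat) (m := 0) (Nat.zero_le _)
      (show Q.iterParent 0 ∈ S by simpa [DyadicCube.iterParent] using hsS Q hQ)
  have htopk : ∀ Q ∈ s, (top Q).k = Q.k + r Q := fun Q _ => DyadicCube.iterParent_k Q (r Q)
  have hrle : ∀ Q ∈ s, (r Q : ℤ) + Q.k ≤ N := by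
    intro Q hQ
    have h1 : r Q ≤ (N - Q.k).toNat := by simp only [hr]; exact Nat.findGreatest_le _
    have h2 : Q.k ≤ N := hkN Q hQ
    omega
  have hmax : ∀ Q ∈ s, ∀ j, r Q < j → (j : ℤ) + Q.k ≤ N → Q.iterParent j ∉ S := by
    intro Q hQ j hj hjN
    simp only [hr] at hj
    have h2 : Q.k ≤ N := hkN Q hQ
    exact Nat.findGreatest_is_greatest hj (by omega)
  have hsub : ∀ Q ∈ s, Q.toSet ⊆ (top Q).toSet := fun Q _ => DyadicCube.subset_iterParent Q (r Q)
  -- disjointness of distinct tops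
  have haux : ∀ Q₁ ∈ s, ∀ Q₂ ∈ s, (top Q₁).k ≤ (top Q₂).k → top Q₁ ≠ top Q₂ →
      Disjoint (top Q₁).toSet (top Q₂).toSet := by
    intro Q₁ h₁ Q₂ h₂ hk hne'
    rw [Set.disjoint_iff_inter_eq_empty]
    by_contra hint
    have hint' : ((top Q₁).toSet ∩ (top Q₂).toSet).Nonempty := Set.nonempty_iff_ne_empty.2 hint
    have heq := DyadicCube.ancestor_of_inter hk hint'
    set d := ((top Q₂).k - (top Q₁).k).toNat with hd
    have hd1 : 1 ≤ d := by
      rcases Nat.eq_zero_or_pos d with h0 | h1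
      · rw [h0] at heq
        simp only [DyadicCube.iterParent, Function.iterate_zero, id] at heq
        exact absurd heq.symm hne'
      · exact h1
    have heq2 : top Q₂ = Q₁.iterParent (r Q₁ + d) := by
      rw [heq, htop]
      exact (DyadicCube.iterParent_iterParent Q₁ (r Q₁) d)
    have hkk : ((r Q₁ + d : ℕ) : ℤ) + Q₁.k ≤ N := by
      have h1 : (top Q₂).k = Q₁.k + (r Q₁ + d : ℕ) := by
        rw [heq2]; exact DyadicCube.iterParent_k _ _
      have h2 := hrle Q₂ h₂
      have h3 := htopk Q₂ h₂
      omega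
    exact hmax Q₁ h₁ (r Q₁ + d) (by omega) hkk (heq2 ▸ htopS Q₂ h₂)
  have hdisj : (↑(s.image top) : Set (DyadicCube n)).PairwiseDisjoint DyadicCube.toSet := by
    intro R₁ hR₁ R₂ hR₂ hne'
    simp only [Finset.coe_image, Set.mem_image, Finset.mem_coe] at hR₁ hR₂
    obtain ⟨Q₁, hQ₁, rfl⟩ := hR₁
    obtain ⟨Q₂, hQ₂, rfl⟩ := hR₂
    rcases le_total (top Q₁).k (top Q₂).k with h | h
    · exact haux Q₁ hQ₁ Q₂ hQ₂ h hne'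
    · exact (haux Q₂ hQ₂ Q₁ hQ₁ h (Ne.symm hne')).symm
  -- main chain
  calc ENNReal.ofReal (t/2) * ∑ Q ∈ s, a Q
      = ENNReal.ofReal (t/2) * ∑ R ∈ s.image top, ∑ Q ∈ s.filter (fun Q => top Q = R), a Q := by
        rw [Finset.sum_fiberwise_of_maps_to (fun Q hQ => Finset.mem_image_of_mem top hQ)]
  _ ≤ ENNReal.ofReal (t/2) * ∑ R ∈ s.image top, (C * μ R.toSet) := by
        gcongr with R hR
        simp only [Finset.mem_image] at hR
        obtain ⟨Q₀, hQ₀, rfl⟩ := hR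
        calc ∑ Q ∈ s.filter (fun Q => top Q = top Q₀), a Q
            = ∑ Q ∈ s.filter (fun Q => top Q = top Q₀),
                Set.indicator {P : DyadicCube n | P.toSet ⊆ (top Q₀).toSet} a Q := by
              apply Finset.sum_congr rfl
              intro Q hQ
              obtain ⟨hQs, hQtop⟩ := Finset.mem_filter.1 hQ
              rw [Set.indicator_of_mem]
              exact hQtop ▸ hsub Q hQs
        _ ≤ ∑' Q : DyadicCube n, Set.indicator {P : DyadicCube n | P.toSet ⊆ (top Q₀).toSet} a Q :=
              ENNReal.sum_le_tsum _
        _ = ∑' Q : {P : DyadicCube n // P.toSet ⊆ (top Q₀).toSet}, a Q.1 := (tsum_subtype _ _).symm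
        _ ≤ C * μ (top Q₀).toSet := hCar _
  _ = C * ∑ R ∈ s.image top, ENNReal.ofReal (t/2) * μ R.toSet := by
        rw [Finset.mul_sum, Finset.mul_sum]
        congr 1
        ext R
        ring
  _ ≤ C * ∑ R ∈ s.image top, ∫⁻ x in R.toSet, φ x ∂μ := by
        gcongr with R hR
        simp only [Finset.mem_image] at hR
        obtain ⟨Q₀, hQ₀, rfl⟩ := hR
        exact key _ (htopS Q₀ hQ₀)
  _ = C * ∫⁻ x in ⋃ R ∈ s.image top, R.toSet, φ x ∂μ := by
        rw [lintegral_biUnion_finset hdisj (fun R _ => R.measurableSet_toSet)]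
  _ ≤ C * ∫⁻ x, φ x ∂μ := by
        gcongr
        exact Measure.restrict_le_self

lemma layercake_single {c : ℝ≥0∞} (hc : c ≠ ⊤) :
    ∫⁻ t in Set.Ioi (0:ℝ), Set.indicator {t : ℝ | ENNReal.ofReal t < c}
      (fun t => 2 * ENNReal.ofReal t) t = c ^ 2 := by
  have hms : MeasurableSet {t : ℝ | ENNReal.ofReal t < c} :=
    ENNReal.measurable_ofReal measurableSet_Iio
  rw [lintegral_indicator hms, Measure.restrict_restrict hms]
  have hset : {t : ℝ | ENNReal.ofReal t < c} ∩ Set.Ioi (0:ℝ) = Set.Ioo 0 c.toReal := by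
    ext u
    simp only [Set.mem_inter_iff, Set.mem_setOf_eq, Set.mem_Ioi, Set.mem_Ioo]
    constructor
    · rintro ⟨h1, h2⟩
      exact ⟨h2, (ENNReal.ofReal_lt_iff_lt_toReal h2.le hc).1 h1⟩
    · rintro ⟨h1, h2⟩
      exact ⟨(ENNReal.ofReal_lt_iff_lt_toReal h1.le hc).2 h2, h1⟩
  rw [hset]
  set b := c.toReal with hb
  have hb0 : 0 ≤ b := ENNReal.toReal_nonneg
  have h1 : ∀ u ∈ Set.Ioo (0:ℝ) b, 2 * ENNReal.ofReal u = ENNReal.ofReal (2 * u) := by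
    intro u hu
    rw [ENNReal.ofReal_mul (by norm_num)]
    norm_num
  rw [setLIntegral_congr_fun measurableSet_Ioo h1]
  have hInt : IntegrableOn (fun u : ℝ => 2 * u) (Set.Ioo 0 b) :=
    ((continuous_const.mul continuous_id).integrableOn_Icc).mono_set Set.Ioo_subset_Icc_self
  rw [← ofReal_integral_eq_lintegral_ofReal hInt
    ((ae_restrict_iff' measurableSet_Ioo).2 (ae_of_all _ fun u hu => by simp only [Pi.zero_apply]; nlinarith [hu.1]))]
  have : ∫ u in Set.Ioo (0:ℝ) b, 2 * u = b ^ 2 := by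
    rw [← integral_Ioc_eq_integral_Ioo, ← intervalIntegral.integral_of_le hb0]
    rw [intervalIntegral.integral_const_mul, integral_id]
    ring
  rw [this, ← ENNReal.ofReal_toReal hc, ← ENNReal.ofReal_pow hb0]

lemma sigmaFinite_of_cubes {n : ℕ} (μ : Measure (Fin n → ℝ))
    (hfin : ∀ Q : DyadicCube n, μ Q.toSet < ⊤) : SigmaFinite μ := by
  apply Measure.sigmaFinite_of_countable (S := Set.range (fun m : Fin n → ℤ => DyadicCube.toSet ⟨0, m⟩))
  · exact Set.countable_range _
  · rintro s ⟨m, rfl⟩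
    exact hfin _
  · apply Set.eq_univ_of_forall
    intro x
    refine Set.mem_sUnion.2 ⟨DyadicCube.toSet ⟨0, fun i => ⌊x i⌋⟩, ⟨_, rfl⟩, ?_⟩
    intro i
    simp only [zpow_zero, mul_one]
    exact ⟨Int.floor_le _, by push_cast; exact Int.lt_floor_add_one _⟩

/-- **Dyadic Carleson embedding theorem.** If `(a_Q)` is a nonnegative sequence indexed by
dyadic cubes satisfying `∑_{Q ⊆ R} a_Q ≤ C μ(R)` for all dyadic `R`, then
`∑_Q a_Q |⟨f⟩^μ_Q|² ≤ C' ‖f‖²_{L²(μ)}` with `C'` depending only on `C`. -/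
theorem dyadic_carleson_embedding (C : ℝ≥0∞) (hC : C ≠ ⊤) :
    ∃ C' : ℝ≥0∞, C' ≠ ⊤ ∧
      ∀ (n : ℕ) (μ : Measure (Fin n → ℝ)),
        (∀ Q : DyadicCube n, μ Q.toSet < ⊤) →
        ∀ a : DyadicCube n → ℝ≥0∞,
          (∀ R : DyadicCube n,
            ∑' Q : {Q : DyadicCube n // Q.toSet ⊆ R.toSet}, a Q.1 ≤ C * μ R.toSet) →
          ∀ f : (Fin n → ℝ) → ℝ, MemLp f 2 μ →
            ∑' Q : DyadicCube n, a Q * ENNReal.ofReal ((avg μ f Q) ^ 2)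
              ≤ C' * eLpNorm f 2 μ ^ 2 := by
  refine ⟨8 * C, ENNReal.mul_ne_top (by norm_num) hC, ?_⟩
  intro n μ hfin a hCar f hf
  haveI : SigmaFinite μ := sigmaFinite_of_cubes μ hfin
  obtain ⟨f', hsm, hae⟩ := hf.1
  have hf' : MemLp f' 2 μ := hf.ae_eq hae
  set g : (Fin n → ℝ) → ℝ≥0∞ := fun x => (‖f' x‖₊ : ℝ≥0∞) with hg
  have hgmeas : Measurable g := hsm.measurable.nnnorm.coe_nnreal_ennreal
  haveI : ∀ Q : DyadicCube n, IsFiniteMeasure (μ.restrict Q.toSet) := fun Q =>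
    ⟨by rw [Measure.restrict_apply_univ]; exact hfin Q⟩
  have hIfin : ∀ Q : DyadicCube n, (∫⁻ x in Q.toSet, g x ∂μ) ≠ ⊤ := by
    intro Q
    have h1 : MemLp f' 1 (μ.restrict Q.toSet) :=
      (hf'.restrict Q.toSet).mono_exponent (by norm_num)
    have := h1.2
    rwa [eLpNorm_one_eq_lintegral_enorm, lt_top_iff_ne_top] at this
  have hAfin : ∀ Q : DyadicCube n, eAvg μ g Q ≠ ⊤ := by
    intro Q
    by_cases h0 : μ Q.toSet = 0
    · rw [eAvg, setLIntegral_measure_zero _ _ h0, ENNReal.zero_div]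
      exact ENNReal.zero_ne_top
    · exact (ENNReal.div_lt_top (hIfin Q) h0).ne
  -- pointwise comparison of averages
  have hAvg : ∀ Q : DyadicCube n, ENNReal.ofReal ((avg μ f Q) ^ 2) ≤ (eAvg μ g Q) ^ 2 := by
    intro Q
    have havgeq : avg μ f Q = avg μ f' Q := by
      have hi : (∫ x in Q.toSet, f x ∂μ) = ∫ x in Q.toSet, f' x ∂μ :=
        integral_congr_ae (ae_restrict_of_ae hae)
      unfold avg
      rw [hi]
    rw [havgeq]
    by_cases h0 : μ Q.toSet = 0
    · rw [avg, if_pos h0]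
      simp
    · have hμpos : 0 < (μ Q.toSet).toReal := ENNReal.toReal_pos h0 (hfin Q).ne
      have hInt : Integrable f' (μ.restrict Q.toSet) := (hf'.restrict Q.toSet).integrable one_le_two
      rw [avg, if_neg h0]
      have h2 : ((∫ x in Q.toSet, f' x ∂μ) / (μ Q.toSet).toReal) ^ 2
          = (|∫ x in Q.toSet, f' x ∂μ| / (μ Q.toSet).toReal) ^ 2 := by
        rw [div_pow, div_pow, sq_abs]
      have key : ENNReal.ofReal (|∫ x in Q.toSet, f' x ∂μ| / (μ Q.toSet).toReal)
          ≤ eAvg μ g Q := by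
        rw [ENNReal.ofReal_div_of_pos hμpos, eAvg, ENNReal.ofReal_toReal (hfin Q).ne]
        gcongr
        calc ENNReal.ofReal |∫ x in Q.toSet, f' x ∂μ|
            = ENNReal.ofReal ‖∫ x in Q.toSet, f' x ∂μ‖ := by rw [Real.norm_eq_abs]
        _ ≤ ENNReal.ofReal (∫ x in Q.toSet, ‖f' x‖ ∂μ) :=
            ENNReal.ofReal_le_ofReal (norm_integral_le_integral_norm _)
        _ = ∫⁻ x in Q.toSet, ‖f' x‖₊ ∂μ := ofReal_integral_norm_eq_lintegral_enorm hInt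
      rw [h2, ENNReal.ofReal_pow (by positivity)]
      exact pow_le_pow_left' key 2
  -- RHS identification
  have hRHS : eLpNorm f 2 μ ^ 2 = ∫⁻ x, g x ^ 2 ∂μ := by
    rw [eLpNorm_congr_ae hae, eLpNorm_eq_lintegral_rpow_enorm_toReal (by norm_num) (by norm_num)]
    rw [ENNReal.toReal_ofNat, ← ENNReal.rpow_natCast _ 2, ← ENNReal.rpow_mul]
    norm_num
    rfl
  rw [hRHS]
  set F : ℝ → (Fin n → ℝ) → ℝ≥0∞ :=
    fun t x => Set.indicator {x' | ENNReal.ofReal (t/2) < g x'} g x with hF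
  have hmeasQ : ∀ Q : DyadicCube n, Measurable (fun t : ℝ =>
      Set.indicator {t' : ℝ | ENNReal.ofReal t' < eAvg μ g Q} (fun t' => 2 * ENNReal.ofReal t') t) :=
    fun Q => (measurable_const.mul ENNReal.measurable_ofReal).indicator
      (ENNReal.measurable_ofReal measurableSet_Iio)
  have h4C : (4 : ℝ≥0∞) * C ≠ ⊤ := ENNReal.mul_ne_top (by norm_num) hC
  calc ∑' Q : DyadicCube n, a Q * ENNReal.ofReal (avg μ f Q ^ 2)
      ≤ ∑' Q : DyadicCube n, a Q * (eAvg μ g Q) ^ 2 :=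
        ENNReal.tsum_le_tsum fun Q => mul_le_mul_right (hAvg Q) _
  _ = ∑' Q : DyadicCube n, ∫⁻ t in Set.Ioi (0:ℝ),
        (Set.indicator {t' : ℝ | ENNReal.ofReal t' < eAvg μ g Q}
          (fun t' => 2 * ENNReal.ofReal t') t) * a Q := by
      refine tsum_congr fun Q => ?_
      rw [lintegral_mul_const'' (a Q) (hmeasQ Q).aemeasurable, layercake_single (hAfin Q), mul_comm]
  _ = ∫⁻ t in Set.Ioi (0:ℝ), ∑' Q : DyadicCube n,
        (Set.indicator {t' : ℝ | ENNReal.ofReal t' < eAvg μ g Q}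
          (fun t' => 2 * ENNReal.ofReal t') t) * a Q :=
      (lintegral_tsum fun Q => ((hmeasQ Q).mul_const _).aemeasurable).symm
  _ ≤ ∫⁻ t in Set.Ioi (0:ℝ), (4 * C) * ∫⁻ x, F t x ∂μ := by
      apply lintegral_mono_ae
      filter_upwards [self_mem_ae_restrict measurableSet_Ioi] with t ht
      have ht' : (0:ℝ) < t := ht
      calc ∑' Q : DyadicCube n,
            (Set.indicator {t' : ℝ | ENNReal.ofReal t' < eAvg μ g Q}
              (fun t' => 2 * ENNReal.ofReal t') t) * a Q
          = 2 * ENNReal.ofReal t *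
              ∑' Q : DyadicCube n, Set.indicator {Q : DyadicCube n | ENNReal.ofReal t < eAvg μ g Q} a Q := by
            rw [← ENNReal.tsum_mul_left]
            refine tsum_congr fun Q => ?_
            by_cases hQ : ENNReal.ofReal t < eAvg μ g Q
            · rw [Set.indicator_of_mem (by exact hQ), Set.indicator_of_mem (by exact hQ)]
            · rw [Set.indicator_of_notMem (by exact hQ), Set.indicator_of_notMem (by exact hQ),
                zero_mul, mul_zero]
      _ = 4 * (ENNReal.ofReal (t/2) *
              ∑' Q : DyadicCube n, Set.indicator {Q : DyadicCube n | ENNReal.ofReal t < eAvg μ g Q} a Q) := by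
            have h24 : 2 * ENNReal.ofReal t = 4 * ENNReal.ofReal (t/2) := by
              rw [show t = t/2 + t/2 by ring, ENNReal.ofReal_add (by linarith) (by linarith)]
              ring_nf
            rw [h24, mul_assoc]
      _ ≤ 4 * (C * ∫⁻ x, F t x ∂μ) := by
            exact mul_le_mul_right (core_bound μ hfin a C hCar g hgmeas t ht') 4
      _ = (4 * C) * ∫⁻ x, F t x ∂μ := by ring
  _ = (4 * C) * ∫⁻ t in Set.Ioi (0:ℝ), ∫⁻ x, F t x ∂μ :=
      lintegral_const_mul' _ _ h4C
  _ = (4 * C) * ∫⁻ x, (∫⁻ t in Set.Ioi (0:ℝ), F t x) ∂μ := by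
      congr 1
      apply lintegral_lintegral_swap
      have huncurry : Function.uncurry F = fun p : ℝ × (Fin n → ℝ) =>
          Set.indicator {p : ℝ × (Fin n → ℝ) | ENNReal.ofReal (p.1/2) < g p.2} (fun p => g p.2) p := by
        funext p
        simp [Function.uncurry, hF, Set.indicator_apply]
      rw [huncurry]
      exact ((hgmeas.comp measurable_snd).indicator
        (measurableSet_lt (ENNReal.measurable_ofReal.comp (measurable_fst.div_const 2))
          (hgmeas.comp measurable_snd))).aemeasurable
  _ = (4 * C) * ∫⁻ x, 2 * g x ^ 2 ∂μ := by
      congr 1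
      refine lintegral_congr fun x => ?_
      have hptw : ∀ t : ℝ, F t x
          = Set.indicator {t' : ℝ | ENNReal.ofReal (t'/2) < g x} (fun _ => g x) t := by
        intro t
        simp [hF, Set.indicator_apply]
      have hms' : MeasurableSet {t' : ℝ | ENNReal.ofReal (t'/2) < g x} :=
        (ENNReal.measurable_ofReal.comp (measurable_id.div_const 2)) measurableSet_Iio
      calc ∫⁻ t in Set.Ioi (0:ℝ), F t x
          = ∫⁻ t in Set.Ioi (0:ℝ),
              Set.indicator {t' : ℝ | ENNReal.ofReal (t'/2) < g x} (fun _ => g x) t :=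
            lintegral_congr fun t => hptw t
      _ = ∫⁻ t in {t' : ℝ | ENNReal.ofReal (t'/2) < g x} ∩ Set.Ioi (0:ℝ), g x := by
            rw [lintegral_indicator hms', Measure.restrict_restrict hms']
      _ = g x * volume ({t' : ℝ | ENNReal.ofReal (t'/2) < g x} ∩ Set.Ioi (0:ℝ)) :=
            setLIntegral_const _ _
      _ = 2 * g x ^ 2 := by
            have hgx : g x ≠ ⊤ := ENNReal.coe_ne_top
            have hset2 : {t' : ℝ | ENNReal.ofReal (t'/2) < g x} ∩ Set.Ioi (0:ℝ)
                = Set.Ioo 0 (2 * (g x).toReal) := by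
              ext u
              simp only [Set.mem_inter_iff, Set.mem_setOf_eq, Set.mem_Ioi, Set.mem_Ioo]
              constructor
              · rintro ⟨h1, h2⟩
                refine ⟨h2, ?_⟩
                have := (ENNReal.ofReal_lt_iff_lt_toReal (by linarith) hgx).1 h1
                linarith
              · rintro ⟨h1, h2⟩
                refine ⟨(ENNReal.ofReal_lt_iff_lt_toReal (by linarith) hgx).2 (by linarith), h1⟩
            rw [hset2, Real.volume_Ioo, sub_zero, ENNReal.ofReal_mul (by norm_num),
              ENNReal.ofReal_toReal hgx, ENNReal.ofReal_ofNat]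
            ring
  _ = 8 * C * ∫⁻ x, g x ^ 2 ∂μ := by
      rw [lintegral_const_mul' 2 _ (by norm_num)]
      ring
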